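/- Optimizing over coprime positive integers j, k with j + k = m, the quantity 2·(1/(q^j−1) + 1/(q^k−1))^{−1} is maximized at (j,k) = (⌈m/2⌉, ⌊m/2⌋) when gcd(⌈m/2⌉,⌊m/2⌋)=1; in particular for odd m, A(p^m) ≥ 2·(1/(p^{⌊m/2⌋}−1) + 1/(p^{⌈m/2⌉}−1))^{−1}, and for m = 3 this equals Zink's bound 2(p²−1)/(p+2). -/
import Mathlib

lemma bbgs_key (x y u v : ℝ) (hx : 1 < x) (hxu : x ≤ u) (huv : u ≤ v) (hvy : v ≤ y)
    (hP : x * y = u * v) :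
    1 / (v - 1) + 1 / (u - 1) ≤ 1 / (x - 1) + 1 / (y - 1) := by
  have hx1 : 0 < x - 1 := by linarith
  have hu1 : 0 < u - 1 := by linarith
  have hv1 : 0 < v - 1 := by linarith
  have hy1 : 0 < y - 1 := by linarith
  rw [div_add_div _ _ (ne_of_gt hv1) (ne_of_gt hu1),
      div_add_div _ _ (ne_of_gt hx1) (ne_of_gt hy1),
      div_le_div_iff₀ (by positivity) (by positivity)]
  have hsum : u + v ≤ x + y := by
    nlinarith [mul_nonneg (sub_nonneg.2 hxu) (sub_nonneg.2 (hvy.trans' huv))]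
  nlinarith [mul_nonneg (sub_nonneg.2 hsum) (sub_nonneg.2 hx.le),
    mul_pos hx1 hy1, mul_pos hu1 hv1]

lemma bbgs_key2 (x y u v : ℝ) (hx : 1 < x) (hxu : x ≤ u) (huv : u ≤ v) (hvy : v ≤ y)
    (hP : x * y = u * v) :
    2 * (1 / (x - 1) + 1 / (y - 1))⁻¹ ≤ 2 * (1 / (v - 1) + 1 / (u - 1))⁻¹ := by
  have hu1 : 0 < u - 1 := by linarith
  have hv1 : 0 < v - 1 := by linarith
  have h := bbgs_key x y u v hx hxu huv hvy hP
  have hpos : 0 < 1 / (v - 1) + 1 / (u - 1) := by positivity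
  gcongr

/-- **Optimizing the BBGS bound.**
For coprime positive integers `j`, `k` with `j + k = m`, the quantity
`2·(1/(p^j − 1) + 1/(p^k − 1))⁻¹` is maximized at `(j, k) = (⌈m/2⌉, ⌊m/2⌋)` when
`gcd(⌈m/2⌉, ⌊m/2⌋) = 1`; in particular, for odd `m`, given the BBGS bound
`A(p^m) ≥ 2·(1/(p^j − 1) + 1/(p^k − 1))⁻¹` for all such `(j, k)`, one gets
`A(p^m) ≥ 2·(1/(p^{⌊m/2⌋} − 1) + 1/(p^{⌈m/2⌉} − 1))⁻¹`, and for `m = 3` this equals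
Zink's bound `2(p² − 1)/(p + 2)`.  (In ℕ-division, `⌊m/2⌋ = m/2` and `⌈m/2⌉ = (m+1)/2`.) -/
theorem bbgs_optimization (p m : ℕ) (hp : p.Prime) (hm : Odd m) (h3 : 3 ≤ m)
    (hcop : Nat.gcd ((m + 1) / 2) (m / 2) = 1)
    (A : ℝ)
    (hBBGS : ∀ j k : ℕ, 0 < j → 0 < k → Nat.Coprime j k → j + k = m →
      2 * (1 / ((p : ℝ) ^ j - 1) + 1 / ((p : ℝ) ^ k - 1))⁻¹ ≤ A) :
    (∀ j k : ℕ, 0 < j → 0 < k → Nat.Coprime j k → j + k = m →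
      2 * (1 / ((p : ℝ) ^ j - 1) + 1 / ((p : ℝ) ^ k - 1))⁻¹ ≤
        2 * (1 / ((p : ℝ) ^ ((m + 1) / 2) - 1) + 1 / ((p : ℝ) ^ (m / 2) - 1))⁻¹) ∧
    2 * (1 / ((p : ℝ) ^ (m / 2) - 1) + 1 / ((p : ℝ) ^ ((m + 1) / 2) - 1))⁻¹ ≤ A ∧
    (m = 3 →
      2 * (1 / ((p : ℝ) ^ (1 : ℕ) - 1) + 1 / ((p : ℝ) ^ (2 : ℕ) - 1))⁻¹ =
        2 * ((p : ℝ) ^ (2 : ℕ) - 1) / ((p : ℝ) + 2)) := by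
  have hp2 : (2 : ℕ) ≤ p := hp.two_le
  have hpR : (2 : ℝ) ≤ (p : ℝ) := by exact_mod_cast hp2
  have hp1 : (1 : ℝ) < (p : ℝ) := by linarith
  set a := (m + 1) / 2 with ha
  set b := m / 2 with hb
  have hab : a + b = m := by omega
  have hba : b ≤ a := by omega
  have hbpos : 0 < b := by omega
  have hapos : 0 < a := by omega
  have hpow : ∀ {i j : ℕ}, i ≤ j → (p : ℝ) ^ i ≤ (p : ℝ) ^ j := fun h =>
    pow_le_pow_right₀ (by linarith) h
  have hgt1 : ∀ {i : ℕ}, 0 < i → (1 : ℝ) < (p : ℝ) ^ i := fun hi =>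
    one_lt_pow₀ hp1 (by omega)
  have main : ∀ j k : ℕ, 0 < j → 0 < k → j + k = m →
      2 * (1 / ((p : ℝ) ^ j - 1) + 1 / ((p : ℝ) ^ k - 1))⁻¹ ≤
        2 * (1 / ((p : ℝ) ^ a - 1) + 1 / ((p : ℝ) ^ b - 1))⁻¹ := by
    intro j k hj hk hjk
    rcases le_total j k with hle | hle
    · have hjb : j ≤ b := by omega
      have hak : a ≤ k := by omega
      exact bbgs_key2 _ _ _ _ (hgt1 hj) (hpow hjb) (hpow hba) (hpow hak)
        (by rw [← pow_add, ← pow_add, hjk, Nat.add_comm b a, hab])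
    · have hkb : k ≤ b := by omega
      have haj : a ≤ j := by omega
      have := bbgs_key2 ((p:ℝ)^k) ((p:ℝ)^j) ((p:ℝ)^b) ((p:ℝ)^a) (hgt1 hk)
        (hpow hkb) (hpow hba) (hpow haj)
        (by rw [← pow_add, ← pow_add, Nat.add_comm k j, hjk, Nat.add_comm b a, hab])
      rw [add_comm (1 / ((p:ℝ)^k - 1))] at this
      exact this
  refine ⟨fun j k hj hk _ hjk => main j k hj hk hjk, ?_, ?_⟩
  · have := hBBGS a b hapos hbpos hcop hab
    rw [add_comm (1 / ((p:ℝ)^b - 1))]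
    exact this
  · intro _
    have h1 : (p : ℝ) - 1 ≠ 0 := by linarith
    have h2 : (p : ℝ) ^ 2 - 1 ≠ 0 := by nlinarith
    have h3 : (p : ℝ) + 2 ≠ 0 := by linarith
    have key : 1/((p:ℝ)-1) + 1/((p:ℝ)^2-1) = ((p:ℝ)+2)/((p:ℝ)^2-1) := by
      field_simp
      ring
    rw [pow_one, key, inv_div, mul_div_assoc]
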